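/- Let m be odd with m > 7 and 1 ≤ l ≤ m-1, and let f(x) = x^m + x^{m-1} + ... + x^{l+1} + x^{l-1} + ... + x + 1 ∈ F_2[x] be a primitive maximum weight polynomial. Then every nonzero polynomial over F_2 of degree at most 2m that is divisible by f has at least 4 nonzero coefficients; equivalently, no nonzero polynomial of degree at most 2m and weight at most 3 is divisible by f. -/

import Mathlib

open Polynomial Finset

/-- Auxiliary: `2 = 0` in `F₂[X]`. -/
lemma MWaux_ptwo : (2 : Polynomial (ZMod 2)) = 0 := by
  have h1 : (2 : Polynomial (ZMod 2)) = C 1 + C 1 := by norm_num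
  rw [h1, ← C_add, show (1:ZMod 2) + 1 = 0 from by decide, map_zero]

lemma MWaux_two_mul_lt (m : ℕ) (h : 8 ≤ m) : 2*m < 2^m - 1 := by
  induction m with
  | zero => omega
  | succ n ih =>
    rcases Nat.lt_or_ge n 8 with h8 | h8
    · have hn : n = 7 := by omega
      subst hn; norm_num
    · have := ih h8
      have h2 : 2^n ≥ 256 := by
        calc 2^n ≥ 2^8 := Nat.pow_le_pow_right (by norm_num) h8
        _ = 256 := by norm_num
      have : 2^(n+1) = 2*2^n := by ring
      omega

lemma MWaux_sumI (m p N : ℕ) :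
    (∑ k ∈ Finset.range (m+1), if N = k + p then (1 : ZMod 2) else 0)
    = if p ≤ N ∧ N ≤ p + m then 1 else 0 := by
  by_cases h : p ≤ N ∧ N ≤ p + m
  · rw [if_pos h, Finset.sum_eq_single (N - p)]
    · rw [if_pos (by omega)]
    · intro k _ hk
      rw [if_neg (by omega)]
    · intro hc
      exact absurd (Finset.mem_range.mpr (by omega)) hc
  · rw [if_neg h]
    apply Finset.sum_eq_zero
    intro k hk
    rw [Finset.mem_range] at hk
    rw [if_neg (by omega)]

lemma MWaux_sumE (m N : ℕ) :
    (∑ k ∈ Finset.range (m+1), if N = k * 2 then (1 : ZMod 2) else 0)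
    = if N % 2 = 0 ∧ N ≤ 2*m then 1 else 0 := by
  by_cases h : N % 2 = 0 ∧ N ≤ 2*m
  · rw [if_pos h, Finset.sum_eq_single (N / 2)]
    · rw [if_pos (by omega)]
    · intro k _ hk
      rw [if_neg (by omega)]
    · intro hc
      exact absurd (Finset.mem_range.mpr (by omega)) hc
  · rw [if_neg h]
    apply Finset.sum_eq_zero
    intro k hk
    rw [Finset.mem_range] at hk
    rw [if_neg (by omega)]

/-- Parity-of-coverage count for four intervals `[p, p+m]`. -/
def MWcov (m a b c l N : ℕ) : ZMod 2 :=
  (if a ≤ N ∧ N ≤ a + m then 1 else 0) + (if b ≤ N ∧ N ≤ b + m then 1 else 0)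
  + (if c ≤ N ∧ N ≤ c + m then 1 else 0) + (if l ≤ N ∧ N ≤ l + m then 1 else 0)

/-- The coefficient identity forced by a trinomial multiple of a maximum weight polynomial. -/
def MWidt (m l i j a b c N : ℕ) : Prop :=
  (if N = j then (1 : ZMod 2) else 0) + (if N = i then 1 else 0) + (if N = 0 then 1 else 0)
  = (if N % 2 = 0 ∧ N ≤ 2*m then 1 else 0) + MWcov m a b c l N
    + (if N = l + a then 1 else 0) + (if N = l + b then 1 else 0) + (if N = l + c then 1 else 0)

instance (m l i j a b c N : ℕ) : Decidable (MWidt m l i j a b c N) := by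
  unfold MWidt MWcov; infer_instance

set_option maxRecDepth 10000 in
lemma MWkey9 : ∀ l ∈ Finset.Icc 1 8, ∀ j ∈ Finset.Icc 1 18, ∀ i ∈ Finset.Icc 1 18, i < j →
    ∃ N ∈ Finset.range 20, ¬ MWidt 9 l i j ((j+10-l)%10) ((i+10-l)%10) (10-l) N := by decide

lemma MWkeyBig (m l a b c i j : ℕ) (hm : 10 ≤ m) (hl : l ≤ m) (ha : a ≤ m) (hb : b ≤ m)
    (hc : c ≤ m) (H : ∀ N, MWidt m l i j a b c N) : False := by
  classical
  set q := MWcov m a b c l with hq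
  have covstep : ∀ N : ℕ, 0 < N → N ≠ a → N ≠ a+(m+1) → N ≠ b → N ≠ b+(m+1)
      → N ≠ c → N ≠ c+(m+1) → N ≠ l → N ≠ l+(m+1) → q N = q (N-1) := by
    intro N h0 h1 h2 h3 h4 h5 h6 h7 h8
    show MWcov m a b c l N = MWcov m a b c l (N-1)
    unfold MWcov
    rw [if_congr (show (a ≤ N ∧ N ≤ a + m) ↔ (a ≤ N-1 ∧ N-1 ≤ a + m) from by omega) rfl rfl,
        if_congr (show (b ≤ N ∧ N ≤ b + m) ↔ (b ≤ N-1 ∧ N-1 ≤ b + m) from by omega) rfl rfl,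
        if_congr (show (c ≤ N ∧ N ≤ c + m) ↔ (c ≤ N-1 ∧ N-1 ≤ c + m) from by omega) rfl rfl,
        if_congr (show (l ≤ N ∧ N ≤ l + m) ↔ (l ≤ N-1 ∧ N-1 ≤ l + m) from by omega) rfl rfl]
  have cov0 : a ≠ 0 → b ≠ 0 → c ≠ 0 → l ≠ 0 → q 0 = 0 := by
    intro h1 h2 h3 h4
    show MWcov m a b c l 0 = 0
    unfold MWcov
    rw [if_neg (by omega), if_neg (by omega), if_neg (by omega), if_neg (by omega)]
    norm_num
  have hEven : ∀ N, N % 2 = 0 → N ≤ 2*m → N ≠ j → N ≠ i → N ≠ 0 → N ≠ l+a → N ≠ l+b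
      → N ≠ l+c → q N = 1 := by
    intro N e1 e2 n1 n2 n3 n4 n5 n6
    have h := H N; unfold MWidt at h
    rw [if_neg n1, if_neg n2, if_neg n3, if_pos ⟨e1,e2⟩, if_neg n4, if_neg n5, if_neg n6] at h
    have h' : (1 : ZMod 2) + q N = 0 := by linear_combination -h
    generalize q N = x at h' ⊢
    revert h'; revert x; decide
  have hOdd : ∀ N, N % 2 = 1 → N ≠ j → N ≠ i → N ≠ l+a → N ≠ l+b → N ≠ l+c → q N = 0 := by
    intro N e1 n1 n2 n4 n5 n6
    have h := H N; unfold MWidt at h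
    rw [if_neg n1, if_neg n2, if_neg (by omega : ¬ N = 0), if_neg (by omega : ¬ (N % 2 = 0 ∧ N ≤ 2*m)),
        if_neg n4, if_neg n5, if_neg n6] at h
    have h' : q N = 0 := by linear_combination -h
    exact h'
  set Ve := (Finset.range (2*m+1)).filter (fun N => N % 2 = 0 ∧ q N = 1) with hVe
  set Vo := (Finset.range (2*m+2)).filter (fun N => N % 2 = 1 ∧ q N = 1) with hVo
  set T : Finset ℕ := {j, i, 0, l+a, l+b, l+c} with hT
  set Te := T.filter (fun N => N % 2 = 0) with hTe
  set To := T.filter (fun N => ¬ (N % 2 = 0)) with hTo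
  set Bad : Finset ℕ := {a, a+(m+1), b, b+(m+1), c, c+(m+1), l, l+(m+1)} with hBad
  set BD := Bad.filter (fun N => N % 2 = 0) with hBD
  set BU := Bad.filter (fun N => ¬ (N % 2 = 0)) with hBU
  set BU' := BU.image (fun N => N - 1) with hBU'
  have hTcard : Te.card + To.card ≤ 6 := by
    have h1 := Finset.card_filter_add_card_filter_not (s := T) (p := fun N => N % 2 = 0)
    have h2 : T.card ≤ 6 := by
      rw [hT]
      refine le_trans (Finset.card_insert_le _ _) (Nat.succ_le_succ ?_)
      refine le_trans (Finset.card_insert_le _ _) (Nat.succ_le_succ ?_)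
      refine le_trans (Finset.card_insert_le _ _) (Nat.succ_le_succ ?_)
      refine le_trans (Finset.card_insert_le _ _) (Nat.succ_le_succ ?_)
      refine le_trans (Finset.card_insert_le _ _) (Nat.succ_le_succ ?_)
      simp
    rw [hTe, hTo]
    omega
  have hBadcard : BD.card + BU.card ≤ 8 := by
    have h1 := Finset.card_filter_add_card_filter_not (s := Bad) (p := fun N => N % 2 = 0)
    have h2 : Bad.card ≤ 8 := by
      rw [hBad]
      refine le_trans (Finset.card_insert_le _ _) (Nat.succ_le_succ ?_)
      refine le_trans (Finset.card_insert_le _ _) (Nat.succ_le_succ ?_)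
      refine le_trans (Finset.card_insert_le _ _) (Nat.succ_le_succ ?_)
      refine le_trans (Finset.card_insert_le _ _) (Nat.succ_le_succ ?_)
      refine le_trans (Finset.card_insert_le _ _) (Nat.succ_le_succ ?_)
      refine le_trans (Finset.card_insert_le _ _) (Nat.succ_le_succ ?_)
      refine le_trans (Finset.card_insert_le _ _) (Nat.succ_le_succ ?_)
      simp
    rw [hBD, hBU]
    omega
  have hEset : ((Finset.range (2*m+1)).filter (fun N => N % 2 = 0)).card = m+1 := by
    have himg : (Finset.range (2*m+1)).filter (fun N => N % 2 = 0)
        = (Finset.range (m+1)).image (fun k => 2*k) := by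
      ext n
      simp only [Finset.mem_filter, Finset.mem_image, Finset.mem_range]
      constructor
      · rintro ⟨h1, h2⟩; exact ⟨n/2, by omega, by omega⟩
      · rintro ⟨k, hk, rfl⟩; omega
    have hinj : Function.Injective (fun k : ℕ => 2*k) := by
      intro x y h
      dsimp only at h
      omega
    rw [himg, Finset.card_image_of_injective _ hinj]
    simp
  have hsub1 : (Finset.range (2*m+1)).filter (fun N => N % 2 = 0) ⊆ Ve ∪ Te := by
    intro N hN
    rw [Finset.mem_filter, Finset.mem_range] at hN
    by_cases hTm : N ∈ T
    · exact Finset.mem_union_right _ (Finset.mem_filter.mpr ⟨hTm, hN.2⟩)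
    · apply Finset.mem_union_left
      rw [hT] at hTm
      simp only [Finset.mem_insert, Finset.mem_singleton, not_or] at hTm
      obtain ⟨n1, n2, n3, n4, n5, n6⟩ := hTm
      exact Finset.mem_filter.mpr ⟨Finset.mem_range.mpr hN.1, hN.2,
        hEven N hN.2 (by omega) n1 n2 n3 n4 n5 n6⟩
  have hsub2 : Vo ⊆ To := by
    intro N hN
    rw [hVo, Finset.mem_filter] at hN
    obtain ⟨_, hodd, hq1⟩ := hN
    have hTm : N ∈ T := by
      by_contra hTm
      rw [hT] at hTm
      simp only [Finset.mem_insert, Finset.mem_singleton, not_or] at hTm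
      obtain ⟨n1, n2, n3, n4, n5, n6⟩ := hTm
      have := hOdd N hodd n1 n2 n4 n5 n6
      rw [this] at hq1
      exact (by decide : (0 : ZMod 2) ≠ 1) hq1
    exact Finset.mem_filter.mpr ⟨hTm, by omega⟩
  have h0notin : (0:ℕ) ∉ Ve \ BD := by
    intro h0
    rw [Finset.mem_sdiff, hVe, Finset.mem_filter] at h0
    obtain ⟨⟨_, _, hq1⟩, hnbd⟩ := h0
    have hzero : a = 0 ∨ b = 0 ∨ c = 0 ∨ l = 0 := by
      by_contra hcon
      push_neg at hcon
      rw [cov0 hcon.1 hcon.2.1 hcon.2.2.1 hcon.2.2.2] at hq1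
      exact (by decide : (0 : ZMod 2) ≠ 1) hq1
    apply hnbd
    rw [hBD, Finset.mem_filter]
    refine ⟨?_, by omega⟩
    rw [hBad]
    rcases hzero with h | h | h | h <;> simp [← h]
  have hinjA : (Ve \ BD).card ≤ Vo.card := by
    apply Finset.card_le_card_of_injOn (fun N => N - 1)
    · intro N hN
      have hN' := hN
      rw [Finset.mem_coe, Finset.mem_sdiff, hVe, Finset.mem_filter, Finset.mem_range] at hN'
      obtain ⟨⟨hlt, heven, hq1⟩, hnbd⟩ := hN'
      have hN0 : N ≠ 0 := fun h => h0notin (h ▸ hN)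
      have hnb : N ∉ Bad := fun hb => hnbd (Finset.mem_filter.mpr ⟨hb, heven⟩)
      rw [hBad] at hnb
      simp only [Finset.mem_insert, Finset.mem_singleton, not_or] at hnb
      obtain ⟨n1, n2, n3, n4, n5, n6, n7, n8⟩ := hnb
      have hstep := covstep N (by omega) n1 n2 n3 n4 n5 n6 n7 n8
      rw [Finset.mem_coe, hVo, Finset.mem_filter, Finset.mem_range]
      beta_reduce
      exact ⟨by omega, by omega, by rw [← hstep]; exact hq1⟩
    · intro x hx y hy hxy
      have hx0 : x ≠ 0 := fun h => h0notin (h ▸ hx)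
      have hy0 : y ≠ 0 := fun h => h0notin (h ▸ hy)
      simp only at hxy
      omega
  have hinjB : (Ve \ BU').card ≤ Vo.card := by
    apply Finset.card_le_card_of_injOn (fun N => N + 1)
    · intro N hN
      rw [Finset.mem_coe, Finset.mem_sdiff, hVe, Finset.mem_filter, Finset.mem_range] at hN
      obtain ⟨⟨hlt, heven, hq1⟩, hnbu⟩ := hN
      have hb : ∀ p : ℕ, p ∈ Bad → N + 1 ≠ p := by
        intro p hp he
        apply hnbu
        rw [hBU', Finset.mem_image]
        refine ⟨p, ?_, by omega⟩
        rw [hBU, Finset.mem_filter]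
        exact ⟨hp, by omega⟩
      have n1 : N+1 ≠ a := hb a (by rw [hBad]; simp)
      have n2 : N+1 ≠ a+(m+1) := hb _ (by rw [hBad]; simp)
      have n3 : N+1 ≠ b := hb b (by rw [hBad]; simp)
      have n4 : N+1 ≠ b+(m+1) := hb _ (by rw [hBad]; simp)
      have n5 : N+1 ≠ c := hb c (by rw [hBad]; simp)
      have n6 : N+1 ≠ c+(m+1) := hb _ (by rw [hBad]; simp)
      have n7 : N+1 ≠ l := hb l (by rw [hBad]; simp)
      have n8 : N+1 ≠ l+(m+1) := hb _ (by rw [hBad]; simp)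
      have hstep := covstep (N+1) (by omega) n1 n2 n3 n4 n5 n6 n7 n8
      simp only [Nat.add_sub_cancel] at hstep
      rw [Finset.mem_coe, hVo, Finset.mem_filter, Finset.mem_range]
      beta_reduce
      exact ⟨by omega, by omega, by rw [hstep]; exact hq1⟩
    · intro x _ y _ hxy
      simpa using hxy
  have c1 : Ve.card ≤ Vo.card + BD.card := by
    have := Finset.card_le_card_sdiff_add_card (s := Ve) (t := BD)
    omega
  have c2 : Ve.card ≤ Vo.card + BU.card := by
    have h1 := Finset.card_le_card_sdiff_add_card (s := Ve) (t := BU')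
    have h2 : BU'.card ≤ BU.card := Finset.card_image_le
    omega
  have hunion := Finset.card_union_le Ve Te
  have hVoTo : Vo.card ≤ To.card := Finset.card_le_card hsub2
  have hmain : m + 1 ≤ Ve.card + Te.card := by
    calc m + 1 = ((Finset.range (2*m+1)).filter (fun N => N % 2 = 0)).card := hEset.symm
    _ ≤ (Ve ∪ Te).card := Finset.card_le_card hsub1
    _ ≤ Ve.card + Te.card := hunion
  omega

lemma MWderive (m l i j : ℕ) (hm : Odd m) (hm2 : 2 ≤ m) (hl1 : 1 ≤ l) (hl2 : l ≤ m - 1)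
    (hi : 0 < i) (hij : i < j) (hj : j ≤ 2*m)
    (hdvd : ((∑ k ∈ Finset.range (m+1), X^k) + X^l : Polynomial (ZMod 2)) ∣ X^j + X^i + 1) :
    ∀ N, MWidt m l i j ((j + (m+1) - l) % (m+1)) ((i + (m+1) - l) % (m+1)) (m+1-l) N := by
  set J : Polynomial (ZMod 2) := ∑ k ∈ Finset.range (m+1), X^k with hJ
  set u := m + 1 - l with hu
  have hul : l + u = m + 1 := by omega
  set D : Polynomial (ZMod 2) := X^(m+1) - 1 with hD
  rw [show j + (m+1) - l = j + u from by omega, show i + (m+1) - l = i + u from by omega]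
  set a := (j + u) % (m+1) with ha
  set b := (i + u) % (m+1) with hb
  have ham : a ≤ m := by
    have := Nat.mod_lt (j + u) (y := m+1) (by omega)
    omega
  have hbm : b ≤ m := by
    have := Nat.mod_lt (i + u) (y := m+1) (by omega)
    omega
  obtain ⟨h, hth⟩ := hdvd
  have hJD : J * (X - 1) = D := geom_sum_mul X (m+1)
  have htwo : (2 : Polynomial (ZMod 2)) = 0 := MWaux_ptwo
  have hJ1 : J.eval 1 = 0 := by
    rw [hJ, Polynomial.eval_finset_sum]
    simp only [eval_pow, eval_X, one_pow, Finset.sum_const, Finset.card_range, nsmul_eq_mul,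
      mul_one]
    have : ((m+1 : ℕ) : ZMod 2) = 0 := by
      rw [ZMod.natCast_eq_zero_iff]
      obtain ⟨k, hk⟩ := hm
      exact ⟨k+1, by omega⟩
    exact this
  have hf1 : ((J + X^l).eval 1) = 1 := by
    simp [hJ1]
  have hev : h.eval 1 = 1 := by
    have h1 := congrArg (Polynomial.eval 1) hth
    simp only [eval_add, eval_pow, eval_X, one_pow, eval_one, eval_mul] at h1
    rw [hJ1, show (1:ZMod 2) + 1 + 1 = 1 from by decide] at h1
    simpa using h1.symm
  have hw5 : ∃ w5, J * h - J = D * w5 := by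
    obtain ⟨w, hw⟩ := Polynomial.X_sub_C_dvd_sub_C_eval (a := (1 : ZMod 2)) (p := h)
    rw [hev, map_one] at hw
    exact ⟨w, by linear_combination J * hw + w * hJD⟩
  obtain ⟨w5, hw5⟩ := hw5
  have hw2 : ∃ w2, J * X^u - J = D * w2 := by
    have hgu : (∑ k ∈ Finset.range u, (X : Polynomial (ZMod 2))^k) * (X - 1) = X^u - 1 :=
      geom_sum_mul X u
    exact ⟨∑ k ∈ Finset.range u, X^k,
      by linear_combination (-J) * hgu + (∑ k ∈ Finset.range u, (X:Polynomial (ZMod 2))^k) * hJD⟩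
  obtain ⟨w2, hw2⟩ := hw2
  have hmod : ∀ n : ℕ, ∃ w, (X : Polynomial (ZMod 2))^n - X^(n % (m+1)) = D * w := by
    intro n
    have h1 : (X : Polynomial (ZMod 2))^n = X^(n % (m+1)) * (X^(m+1))^(n / (m+1)) := by
      rw [← pow_mul, ← pow_add]
      congr 1
      exact (Nat.mod_add_div n (m+1)).symm
    have h2 := sub_dvd_pow_sub_pow ((X : Polynomial (ZMod 2))^(m+1)) 1 (n / (m+1))
    rw [one_pow] at h2
    obtain ⟨w, hw⟩ := h2
    exact ⟨X^(n % (m+1)) * w, by rw [h1]; linear_combination (X^(n % (m+1)) : Polynomial (ZMod 2)) * hw⟩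
  obtain ⟨w3, hw3⟩ := hmod (j + u)
  obtain ⟨w4, hw4⟩ := hmod (i + u)
  rw [← ha] at hw3
  rw [← hb] at hw4
  rw [pow_add] at hw3 hw4
  have hDeq : D = X^l * X^u - 1 := by
    rw [hD, ← pow_add, hul]
  have hQ : h + J - (X^a + X^b + X^u) = D * (w3 + w4 - w2 - X^u * w5 - h) := by
    linear_combination hw3 + hw4 - (X^u : Polynomial (ZMod 2)) * hth - hw2
      - (X^u : Polynomial (ZMod 2)) * hw5 + h * hDeq
  have hfne : (J + X^l) ≠ 0 := fun hc => by simp [hc] at hf1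
  have hhne : h ≠ 0 := fun hc => by simp [hc] at hev
  have hJdeg : J.natDegree ≤ m := by
    rw [hJ]
    apply Polynomial.natDegree_sum_le_of_forall_le
    intro k hk
    rw [Finset.mem_range] at hk
    simpa [Polynomial.natDegree_X_pow] using by omega
  have hfdeg : (J + X^l).natDegree = m := by
    apply le_antisymm
    · refine le_trans (Polynomial.natDegree_add_le _ _) ?_
      simp only [Polynomial.natDegree_X_pow]
      omega
    · apply Polynomial.le_natDegree_of_ne_zero
      rw [Polynomial.coeff_add, hJ, Polynomial.finset_sum_coeff]
      simp only [Polynomial.coeff_X_pow]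
      rw [Finset.sum_eq_single m]
      · rw [if_pos rfl, if_neg (by omega)]
        norm_num
      · intro k _ hk
        rw [if_neg (by omega)]
      · intro hc
        exact absurd (Finset.mem_range.mpr (by omega)) hc
  have htdeg : (X^j + X^i + 1 : Polynomial (ZMod 2)).natDegree ≤ 2*m := by
    refine le_trans (Polynomial.natDegree_add_le _ _) ?_
    refine max_le (le_trans (Polynomial.natDegree_add_le _ _) ?_) ?_
    · simp only [Polynomial.natDegree_X_pow]
      omega
    · simp
  have hhdeg : h.natDegree ≤ m := by
    have := Polynomial.natDegree_mul hfne hhne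
    rw [← hth, hfdeg] at this
    omega
  have hQdeg : (h + J - (X^a + X^b + X^u)).natDegree ≤ m := by
    refine le_trans (Polynomial.natDegree_sub_le _ _) ?_
    refine max_le (le_trans (Polynomial.natDegree_add_le _ _) (max_le hhdeg hJdeg)) ?_
    refine le_trans (Polynomial.natDegree_add_le _ _) ?_
    refine max_le (le_trans (Polynomial.natDegree_add_le _ _) ?_) ?_ <;>
      simp only [Polynomial.natDegree_X_pow]
    · refine max_le ?_ ?_ <;> omega
    · omega
  have hDdeg : D.natDegree = m + 1 := by
    rw [hD, show (1 : Polynomial (ZMod 2)) = C 1 from (map_one C).symm]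
    exact Polynomial.natDegree_X_pow_sub_C
  have hQ0 : h + J - (X^a + X^b + X^u) = 0 := by
    apply Polynomial.eq_zero_of_dvd_of_natDegree_lt ⟨_, hQ⟩
    omega
  have hfinal : h = X^a + X^b + X^u - J := by linear_combination hQ0
  have hJJ : J * J = ∑ k ∈ Finset.range (m+1), X^(k*2) := by
    have h2 : J * J = J^2 := (sq J).symm
    rw [h2, hJ, sum_pow_char]
    exact Finset.sum_congr rfl fun k _ => by rw [← pow_mul]
  have hJp : ∀ p : ℕ, J * X^p = ∑ k ∈ Finset.range (m+1), X^(k+p) := by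
    intro p
    rw [hJ, Finset.sum_mul]
    exact Finset.sum_congr rfl fun k _ => by rw [← pow_add]
  have hstar : (X^j + X^i + 1 : Polynomial (ZMod 2))
      = (∑ k ∈ Finset.range (m+1), X^(k*2)) + (∑ k ∈ Finset.range (m+1), X^(k+a))
        + (∑ k ∈ Finset.range (m+1), X^(k+b)) + (∑ k ∈ Finset.range (m+1), X^(k+u))
        + (∑ k ∈ Finset.range (m+1), X^(k+l))
        + X^(l+a) + X^(l+b) + X^(l+u) := by
    rw [← hJJ, ← hJp a, ← hJp b, ← hJp u, ← hJp l, hth, hfinal]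
    linear_combination (-(J*J) - J*(X^l : Polynomial (ZMod 2))) * htwo
  intro N
  have hcN := congrArg (fun p => Polynomial.coeff p N) hstar
  simp only [Polynomial.coeff_add, Polynomial.finset_sum_coeff, Polynomial.coeff_X_pow,
    Polynomial.coeff_one, MWaux_sumE, MWaux_sumI] at hcN
  unfold MWidt MWcov
  linear_combination hcN

theorem primitive_maxweight_min_weight_four (m l : ℕ) (hm : Odd m) (hm7 : 7 < m)
    (hl1 : 1 ≤ l) (hl2 : l ≤ m - 1)
    (f : Polynomial (ZMod 2))
    (hf : f = (∑ i ∈ Finset.range (m + 1), X ^ i) + X ^ l)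
    (hirr : Irreducible f)
    (hperiod : IsLeast {e : ℕ | 0 < e ∧ f ∣ X ^ e - 1} (2 ^ m - 1)) :
    ∀ g : Polynomial (ZMod 2), g ≠ 0 → g.natDegree ≤ 2 * m → f ∣ g → 4 ≤ g.support.card := by
  intro g hg0 hgdeg hfdvd
  by_contra hcon
  push_neg at hcon
  have hm9 : 9 ≤ m := by
    obtain ⟨k, hk⟩ := hm
    omega
  have hprime : Prime f := UniqueFactorizationMonoid.irreducible_iff_prime.mp hirr
  -- natDegree f = m
  have hfdeg : f.natDegree = m := by
    rw [hf]
    apply le_antisymm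
    · refine le_trans (Polynomial.natDegree_add_le _ _) ?_
      refine max_le (Polynomial.natDegree_sum_le_of_forall_le _ _ ?_) ?_
      · intro k hk
        rw [Finset.mem_range] at hk
        simpa [Polynomial.natDegree_X_pow] using by omega
      · simp only [Polynomial.natDegree_X_pow]
        omega
    · apply Polynomial.le_natDegree_of_ne_zero
      rw [Polynomial.coeff_add, Polynomial.finset_sum_coeff]
      simp only [Polynomial.coeff_X_pow]
      rw [Finset.sum_eq_single m]
      · rw [if_pos rfl, if_neg (by omega)]
        norm_num
      · intro k _ hk
        rw [if_neg (by omega)]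
      · intro hc
        exact absurd (Finset.mem_range.mpr (by omega)) hc
  have hfX : ¬ f ∣ X := by
    intro hdx
    have := Polynomial.natDegree_le_of_dvd hdx Polynomial.X_ne_zero
    rw [hfdeg, Polynomial.natDegree_X] at this
    omega
  have hXpow : ∀ n : ℕ, ¬ f ∣ X^n := by
    intro n hdn
    rcases Nat.eq_zero_or_pos n with rfl | hn
    · exact hirr.not_isUnit (isUnit_of_dvd_one (by simpa using hdn))
    · exact hfX (hprime.dvd_of_dvd_pow hdn)
  have hgap : ∀ e : ℕ, 0 < e → e ≤ 2*m → ¬ f ∣ X^e - 1 := by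
    intro e he0 he2 hd
    have hge := hperiod.2 (Set.mem_setOf.mpr ⟨he0, hd⟩)
    have := MWaux_two_mul_lt m (by omega)
    omega
  have hone : ∀ y : ZMod 2, y ≠ 0 → y = 1 := by decide
  have hcc : g.support.card = 0 ∨ g.support.card = 1 ∨ g.support.card = 2
      ∨ g.support.card = 3 := by omega
  rcases hcc with hcc | hcc | hcc | hcc
  · exact hg0 (Polynomial.support_eq_empty.mp (Finset.card_eq_zero.mp hcc))
  · obtain ⟨k, x, hx, hgeq⟩ := Polynomial.card_support_eq_one.mp hcc
    rw [hone x hx, map_one, one_mul] at hgeq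
    rw [hgeq] at hfdvd
    exact hXpow k hfdvd
  · obtain ⟨k, v, hkv, x, y, hx, hy, hgeq⟩ := Polynomial.card_support_eq_two.mp hcc
    rw [hone x hx, hone y hy, map_one, one_mul, one_mul] at hgeq
    have hfac : (X^k * (1 + X^(v-k)) : Polynomial (ZMod 2)) = X^k + X^v := by
      rw [mul_add, mul_one, ← pow_add, show k + (v-k) = v from by omega]
    rw [hgeq, ← hfac] at hfdvd
    have hdw := (hprime.dvd_mul.mp hfdvd).resolve_left (hXpow k)
    have hXe : (X^(v-k) - 1 : Polynomial (ZMod 2)) = 1 + X^(v-k) := by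
      linear_combination -MWaux_ptwo
    have hv2m : v ≤ 2*m := by
      have hcv : g.coeff v = 1 := by
        rw [hgeq, Polynomial.coeff_add, Polynomial.coeff_X_pow, Polynomial.coeff_X_pow,
          if_neg (by omega), if_pos rfl]
        norm_num
      have := Polynomial.le_natDegree_of_ne_zero (p := g) (n := v) (by rw [hcv]; norm_num)
      omega
    exact hgap (v-k) (by omega) (by omega) (by rw [hXe]; exact hdw)
  · obtain ⟨k, v, w, hkv, hvw, x, y, z, hx, hy, hz, hgeq⟩ :=
      Polynomial.card_support_eq_three.mp hcc
    rw [hone x hx, hone y hy, hone z hz, map_one, one_mul, one_mul, one_mul] at hgeq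
    have hfac : (X^k * (1 + X^(v-k) + X^(w-k)) : Polynomial (ZMod 2)) = X^k + X^v + X^w := by
      rw [mul_add, mul_add, mul_one, ← pow_add, ← pow_add,
        show k + (v-k) = v from by omega, show k + (w-k) = w from by omega]
    rw [hgeq, ← hfac] at hfdvd
    have hdw := (hprime.dvd_mul.mp hfdvd).resolve_left (hXpow k)
    have hw2m : w ≤ 2*m := by
      have hcw : g.coeff w = 1 := by
        rw [hgeq, Polynomial.coeff_add, Polynomial.coeff_add, Polynomial.coeff_X_pow,
          Polynomial.coeff_X_pow, Polynomial.coeff_X_pow,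
          if_neg (by omega), if_neg (by omega), if_pos rfl]
        norm_num
      have := Polynomial.le_natDegree_of_ne_zero (p := g) (n := w) (by rw [hcw]; norm_num)
      omega
    set i := v - k with hidef
    set j := w - k with hjdef
    have hre : (1 + X^i + X^j : Polynomial (ZMod 2)) = X^j + X^i + 1 := by ring
    rw [hre, hf] at hdw
    have Hidt := MWderive m l i j hm (by omega) hl1 hl2 (by omega) (by omega) (by omega) hdw
    rcases Nat.lt_or_ge m 10 with h10 | h10
    · have hm9' : m = 9 := by omega
      subst hm9'
      have hkey := MWkey9 l (Finset.mem_Icc.mpr ⟨hl1, by omega⟩)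
        j (Finset.mem_Icc.mpr ⟨by omega, by omega⟩)
        i (Finset.mem_Icc.mpr ⟨by omega, by omega⟩) (by omega)
      obtain ⟨N, _, hN⟩ := hkey
      apply hN
      have := Hidt N
      norm_num at this ⊢
      exact this
    · have ham : (j + (m+1) - l) % (m+1) ≤ m := by
        have := Nat.mod_lt (j + (m+1) - l) (y := m+1) (by omega)
        omega
      have hbm : (i + (m+1) - l) % (m+1) ≤ m := by
        have := Nat.mod_lt (i + (m+1) - l) (y := m+1) (by omega)
        omega
      exact MWkeyBig m l _ _ _ i j h10 (by omega) ham hbm (by omega) Hidt
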